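/- Let q, a, b, x, u, y ∈ ℂ with 0 < |q| < 1, |u| ≤ 1, |b y| < 1, x ≠ 0, 1 - a q^j x ≠ 0 for 0 ≤ j ≤ n - 1, and 1 - b q^j x ≠ 0 for all j ≥ 0, and let n ∈ ℕ. Then T(y D_q|u) applied to the function t ↦ (a t;q)_n/(b t;q)_n, evaluated at x, equals ((a x;q)_n/(b x;q)_n) · ∑_{i=0}^{n} (u q)^{C(i,2)} [n choose i]_q ((b x;q)_i (-a y)^i / ((a x;q)_i (b q^n x;q)_i)) · ∑_{m=0}^{∞} u^{C(m,2)} (q^n;q)_m (u^i b y)^m / ((q;q)_m (b q^{n+i} x;q)_m), all series converging absolutely. -/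

import Mathlib

/-- The finite q-shifted factorial (a;q)_n = ∏_{j=0}^{n-1} (1 - a q^j). -/
noncomputable def qPoch (q a : ℂ) (n : ℕ) : ℂ :=
  ∏ j ∈ Finset.range n, (1 - a * q ^ j)

/-- The q-binomial coefficient [n choose k]_q = (q;q)_n / ((q;q)_k (q;q)_{n-k}). -/
noncomputable def qBinom (q : ℂ) (n k : ℕ) : ℂ :=
  qPoch q q n / (qPoch q q k * qPoch q q (n - k))

/-- The q-differential operator: (D_q f)(x) = (f(x) - f(qx))/x. -/
noncomputable def Dq (q : ℂ) (f : ℂ → ℂ) : ℂ → ℂ :=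
  fun x => (f x - f (q * x)) / x

/-- The deformed q-exponential operator:
T(y D_q|u) f(x) = ∑_{m≥0} u^{C(m,2)} (y^m/(q;q)_m) (D_q^m f)(x). -/
noncomputable def Tq (q u y : ℂ) (f : ℂ → ℂ) (x : ℂ) : ℂ :=
  ∑' m : ℕ, u ^ (m.choose 2) * (y ^ m / qPoch q q m) * ((Dq q)^[m] f x)

lemma qPoch_zero (q a : ℂ) : qPoch q a 0 = 1 := by simp [qPoch]

lemma qPoch_succ (q a : ℂ) (n : ℕ) : qPoch q a (n+1) = qPoch q a n * (1 - a * q ^ n) :=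
  Finset.prod_range_succ _ _

lemma qPoch_succ' (q a : ℂ) (n : ℕ) : qPoch q a (n+1) = (1 - a) * qPoch q (a*q) n := by
  rw [qPoch, Finset.prod_range_succ']
  simp only [pow_zero, mul_one, pow_succ]
  rw [qPoch, mul_comm]
  congr 1
  exact Finset.prod_congr rfl fun j _ => by ring_nf

lemma qPoch_congr (q : ℂ) {a b : ℂ} (n : ℕ) (h : a = b) : qPoch q a n = qPoch q b n := by rw [h]

lemma qPoch_add (q a : ℂ) (m n : ℕ) :
    qPoch q a (m+n) = qPoch q a m * qPoch q (a * q ^ m) n := by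
  rw [qPoch, Finset.prod_range_add]
  congr 1
  exact Finset.prod_congr rfl fun j _ => by rw [pow_add]; ring_nf

lemma qPoch_ne_zero (q a : ℂ) (n : ℕ) (h : ∀ j, j < n → 1 - a * q ^ j ≠ 0) :
    qPoch q a n ≠ 0 :=
  Finset.prod_ne_zero_iff.mpr fun j hj => h j (Finset.mem_range.mp hj)

lemma choose_two_succ (m : ℕ) : (m+1).choose 2 = m.choose 2 + m := by
  rw [Nat.choose_succ_succ]; simp [Nat.choose_one_right]; omega

lemma choose_two_add (k m : ℕ) : (k+m).choose 2 = k.choose 2 + m.choose 2 + k*m := by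
  induction m with
  | zero => simp
  | succ m ih => rw [← Nat.add_assoc, choose_two_succ, choose_two_succ, ih]; ring

section main
variable {q a b x u y : ℂ} {n : ℕ}
variable (hq0 : 0 < ‖q‖) (hq1 : ‖q‖ < 1)

include hq0 in
lemma hqne : q ≠ 0 := by
  intro h; rw [h] at hq0; simp at hq0

include hq0 hq1 in
lemma q_pow_ne_one {j : ℕ} (hj : 1 ≤ j) : q ^ j ≠ 1 := by
  intro h
  have : ‖q ^ j‖ = 1 := by rw [h]; simp
  rw [norm_pow] at this
  have h2 : ‖q‖ ^ j < 1 := pow_lt_one₀ (le_of_lt hq0) hq1 (by omega)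
  rw [this] at h2; exact lt_irrefl _ h2

include hq0 hq1 in
lemma qq_ne_zero (m : ℕ) : qPoch q q m ≠ 0 := by
  apply qPoch_ne_zero
  intro j _ h
  have : q ^ (j+1) = 1 := by
    have := sub_eq_zero.mp h
    rw [pow_succ, mul_comm, ← this]
  exact q_pow_ne_one hq0 hq1 (by omega) this
end main

section dqlemmas
variable {q : ℂ}

lemma Dq_qPoch (c : ℂ) (m : ℕ) {x : ℂ} (hx : x ≠ 0) :
    Dq q (fun t => qPoch q (c*t) m) x = -c * (1 - q^m) * qPoch q (c*q*x) (m-1) := by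
  cases m with
  | zero => simp [Dq, qPoch]
  | succ M =>
    have h1 : qPoch q (c*x) (M+1) = (1 - c*x) * qPoch q (c*q*x) M := by
      rw [qPoch_succ']; congr 1; exact qPoch_congr q _ (by ring)
    have h2 : qPoch q (c*(q*x)) (M+1) = qPoch q (c*q*x) M * (1 - c*q*x*q^M) := by
      rw [qPoch_succ]; rw [qPoch_congr q _ (show c*(q*x) = c*q*x by ring)]; ring
    simp only [Dq, h1, h2, Nat.add_sub_cancel]
    field_simp
    ring
end dqlemmas

section withvars
variable {q a b x : ℂ} {n : ℕ}
variable (hq0 : 0 < ‖q‖) (hq1 : ‖q‖ < 1)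

include hq0 hq1 in
lemma one_sub_qpow_ne {j : ℕ} (hj : 1 ≤ j) : 1 - q^j ≠ 0 :=
  sub_ne_zero.mpr (Ne.symm (q_pow_ne_one hq0 hq1 hj))

omit hq0 hq1 in
lemma qq_succ (j : ℕ) : qPoch q q (j+1) = qPoch q q j * (1 - q^(j+1)) := by
  rw [qPoch_succ, show (1 : ℂ) - q*q^j = 1 - q^(j+1) by rw [pow_succ]; ring]

include hq0 hq1 in
/-- closed form for iterates of Dq on (at;q)_n -/
lemma DqA_iter : ∀ (k : ℕ) (x : ℂ), x ≠ 0 →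
    (Dq q)^[k] (fun t => qPoch q (a*t) n) x =
      if k ≤ n then
        (-a)^k * q^(k.choose 2) * (qPoch q q n / qPoch q q (n-k)) * qPoch q (a*q^k*x) (n-k)
      else 0 := by
  intro k
  induction k with
  | zero =>
    intro x hx
    simp only [Function.iterate_zero, id_eq, Nat.zero_le, if_true]
    simp [qPoch_congr q (n := n) (show a*q^0*x = a*x by ring), div_self (qq_ne_zero hq0 hq1 n)]
  | succ k ih =>
    intro x hx
    have hqx : q * x ≠ 0 := mul_ne_zero (hqne hq0) hx
    rw [Function.iterate_succ_apply', Dq, ih x hx, ih (q*x) hqx]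
    by_cases hk1 : k + 1 ≤ n
    · have hkn : k ≤ n := by omega
      obtain ⟨j, hj⟩ : ∃ j, n - k = j + 1 := ⟨n - (k+1), by omega⟩
      have hj2 : n - (k+1) = j := by omega
      rw [if_pos hkn, if_pos hkn, if_pos hk1, hj, hj2]
      have hD := Dq_qPoch (q := q) (a*q^k) (j+1) hx
      simp only [Dq, Nat.add_sub_cancel] at hD
      rw [← mul_sub, mul_div_assoc, hD,
        qPoch_congr q (n := j) (show a*q^k*q*x = a*q^(k+1)*x by rw [pow_succ]; ring)]
      rw [qq_succ j, choose_two_succ]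
      have h5 : (1 : ℂ) - q^(j+1) ≠ 0 := one_sub_qpow_ne hq0 hq1 (by omega)
      have h6 : qPoch q q j ≠ 0 := qq_ne_zero hq0 hq1 j
      field_simp
      ring
    · by_cases hkn : k ≤ n
      · have : k = n := by omega
        subst this
        rw [if_pos hkn, if_pos hkn, if_neg hk1, Nat.sub_self]
        simp [qPoch_zero]
      · rw [if_neg hkn, if_neg hkn, if_neg hk1]
        simp
end withvars

section recip
variable {q b : ℂ} {n : ℕ}
variable (hq0 : 0 < ‖q‖) (hq1 : ‖q‖ < 1)

include hq0 in
lemma DqB_iter : ∀ (m : ℕ) (x : ℂ), x ≠ 0 → (∀ j : ℕ, 1 - b * q^j * x ≠ 0) →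
    (Dq q)^[m] (fun t => (qPoch q (b*t) n)⁻¹) x =
      b^m * qPoch q (q^n) m / qPoch q (b*x) (n+m) := by
  intro m
  induction m with
  | zero =>
    intro x hx hbx
    simp only [Function.iterate_zero, id_eq, pow_zero, qPoch_zero, Nat.add_zero, mul_one]
    rw [inv_eq_one_div]
  | succ m ih =>
    intro x hx hbx
    have hqx : q * x ≠ 0 := mul_ne_zero (hqne hq0) hx
    have hbqx : ∀ j : ℕ, 1 - b * q^j * (q*x) ≠ 0 := by
      intro j
      rw [show b*q^j*(q*x) = b*q^(j+1)*x by rw [pow_succ]; ring]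
      exact hbx (j+1)
    rw [Function.iterate_succ_apply', Dq, ih x hx hbx, ih (q*x) hqx hbqx]
    have hA : ∀ (c N : ℕ), qPoch q (b*q^c*x) N ≠ 0 := by
      intro c N
      apply qPoch_ne_zero
      intro j _
      rw [show b*q^c*x*q^j = b*q^(c+j)*x by rw [pow_add]; ring]
      exact hbx (c+j)
    have hbqx0 : ∀ N, qPoch q (b*(q*x)) N ≠ 0 := by
      intro N
      have := hA 1 N
      rwa [qPoch_congr q (n := N) (show b*q^(1:ℕ)*x = b*(q*x) by rw [pow_one]; ring)] at this
    rcases Nat.eq_zero_or_pos (n+m) with h0 | hpos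
    · have hn : n = 0 := by omega
      have hm : m = 0 := by omega
      subst hn hm
      simp [qPoch, Finset.prod_range_succ]
    · obtain ⟨N, hN⟩ : ∃ N, n + m = N + 1 := ⟨n + m - 1, by omega⟩
      rw [hN, show n + (m+1) = N+2 by omega]
      have r1 : qPoch q (b*x) (N+1) = (1-b*x) * qPoch q (b*(q*x)) N := by
        rw [qPoch_succ']; congr 1; exact qPoch_congr q _ (by ring)
      have r2 : qPoch q (b*(q*x)) (N+1) = qPoch q (b*(q*x)) N * (1 - b*q^(N+1)*x) := by
        rw [qPoch_succ]; congr 1; rw [pow_succ]; ring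
      have r3 : qPoch q (b*x) (N+2) = (1-b*x) * (qPoch q (b*(q*x)) N * (1 - b*q^(N+1)*x)) := by
        rw [show N+2 = (N+1)+1 from rfl, qPoch_succ',
          qPoch_congr q (n := N+1) (show b*x*q = b*(q*x) by ring), r2]
      have r4 : qPoch q (q^n) (m+1) = qPoch q (q^n) m * (1 - q^(N+1)) := by
        rw [qPoch_succ, ← pow_add, hN]
      have h1x : (1:ℂ) - b*x ≠ 0 := by
        have := hbx 0; rwa [pow_zero, mul_one] at this
      have hR : qPoch q (b*(q*x)) N ≠ 0 := hbqx0 N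
      have h2x : 1 - b*q^(N+1)*x ≠ 0 := hbx (N+1)
      rw [r1, r2, r3, r4]
      rw [div_sub_div _ _ (mul_ne_zero h1x hR) (mul_ne_zero hR h2x), div_div,
        div_eq_div_iff (mul_ne_zero (mul_ne_zero (mul_ne_zero h1x hR) (mul_ne_zero hR h2x)) hx)
          (mul_ne_zero h1x (mul_ne_zero hR h2x))]
      ring
end recip

section leibniz
variable {q : ℂ}
variable (hq0 : 0 < ‖q‖) (hq1 : ‖q‖ < 1)

include hq0 hq1 in
lemma qBinom_zero_r (N : ℕ) : qBinom q N 0 = 1 := by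
  simp only [qBinom, qPoch_zero, Nat.sub_zero, one_mul]
  exact div_self (qq_ne_zero hq0 hq1 N)

include hq0 hq1 in
lemma qBinom_self (N : ℕ) : qBinom q N N = 1 := by
  simp only [qBinom, Nat.sub_self, qPoch_zero, mul_one]
  exact div_self (qq_ne_zero hq0 hq1 N)

include hq0 hq1 in
lemma qPascal (m j : ℕ) (h1 : 1 ≤ j) (h2 : j ≤ m) :
    qBinom q (m+1) j = q^j * qBinom q m j + qBinom q m (j-1) := by
  obtain ⟨i, rfl⟩ : ∃ i, j = i + 1 := ⟨j - 1, by omega⟩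
  obtain ⟨s, rfl⟩ : ∃ s, m = i + 1 + s := ⟨m - (i+1), by omega⟩
  simp only [qBinom, Nat.add_sub_cancel]
  rw [show i+1+s+1-(i+1) = s+1 by omega, show i+1+s-(i+1) = s by omega, show i+1+s-i = s+1 by omega]
  rw [qq_succ (i+1+s)]
  have hpow : q^(i+1+s+1) = q^(i+1) * q^(s+1) := by ring
  rw [hpow, qq_succ i, qq_succ s]
  have n1 : qPoch q q i ≠ 0 := qq_ne_zero hq0 hq1 i
  have n2 : qPoch q q s ≠ 0 := qq_ne_zero hq0 hq1 s
  have n4 : (1:ℂ) - q^(i+1) ≠ 0 := one_sub_qpow_ne hq0 hq1 (by omega)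
  have n5 : (1:ℂ) - q^(s+1) ≠ 0 := one_sub_qpow_ne hq0 hq1 (by omega)
  have hne1 : qPoch q q i * (1 - q^(i+1)) * qPoch q q s ≠ 0 :=
    mul_ne_zero (mul_ne_zero n1 n4) n2
  have hne2 : qPoch q q i * (qPoch q q s * (1 - q^(s+1))) ≠ 0 :=
    mul_ne_zero n1 (mul_ne_zero n2 n5)
  have hne3 : qPoch q q i * (1 - q^(i+1)) * (qPoch q q s * (1 - q^(s+1))) ≠ 0 :=
    mul_ne_zero (mul_ne_zero n1 n4) (mul_ne_zero n2 n5)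
  rw [mul_div_assoc', div_add_div _ _ hne1 hne2, div_eq_div_iff hne3 (mul_ne_zero hne1 hne2)]
  ring

include hq0 hq1 in
lemma qLeibniz (f g : ℂ → ℂ) : ∀ (m : ℕ) (x : ℂ),
    (Dq q)^[m] (fun t => f t * g t) x =
      ∑ k ∈ Finset.range (m+1),
        qBinom q m k * ((Dq q)^[k] f x * (Dq q)^[m-k] g (q^k * x)) := by
  intro m
  induction m with
  | zero =>
    intro x
    simp [Finset.sum_range_one, qBinom, qPoch]
  | succ m ih =>
    intro x
    have hfun : (Dq q)^[m] (fun t => f t * g t) = fun z =>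
        ∑ k ∈ Finset.range (m+1),
          qBinom q m k * ((Dq q)^[k] f z * (Dq q)^[m-k] g (q^k * z)) := funext ih
    rw [Function.iterate_succ_apply', hfun, Dq]
    rw [← Finset.sum_sub_distrib, Finset.sum_div]
    have step1 : ∀ k ∈ Finset.range (m+1),
        (qBinom q m k * ((Dq q)^[k] f x * (Dq q)^[m-k] g (q^k * x)) -
         qBinom q m k * ((Dq q)^[k] f (q*x) * (Dq q)^[m-k] g (q^k * (q*x)))) / x
        = q^k * qBinom q m k * ((Dq q)^[k] f x * (Dq q)^[m+1-k] g (q^k * x)) +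
          qBinom q m k * ((Dq q)^[k+1] f x * (Dq q)^[m-k] g (q^(k+1) * x)) := by
      intro k hk
      have hmk : m + 1 - k = (m - k) + 1 := by
        have := Finset.mem_range.mp hk; omega
      rw [hmk, Function.iterate_succ_apply' (Dq q) (m-k) g,
          Function.iterate_succ_apply' (Dq q) k f, Dq, Dq]
      rw [show q^k * (q*x) = q * (q^k * x) by ring,
          show q^(k+1) * x = q * (q^k * x) by rw [pow_succ]; ring]
      by_cases hx : x = 0
      · subst hx
        simp
      · have hqk : q^k * x ≠ 0 := mul_ne_zero (pow_ne_zero _ (hqne hq0)) hx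
        have hq' : q ≠ 0 := hqne hq0
        field_simp
        ring
    rw [Finset.sum_congr rfl step1, Finset.sum_add_distrib]
    conv_rhs => rw [Finset.sum_range_succ, Finset.sum_range_succ']
    rw [Finset.sum_range_succ' (fun k => q^k * qBinom q m k *
          ((Dq q)^[k] f x * (Dq q)^[m+1-k] g (q^k * x))) m]
    rw [Finset.sum_range_succ (fun k => qBinom q m k *
          ((Dq q)^[k+1] f x * (Dq q)^[m-k] g (q^(k+1) * x))) m]
    have e0 : q^(0:ℕ) * qBinom q m 0 * ((Dq q)^[0] f x * (Dq q)^[m+1-0] g (q^(0:ℕ) * x))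
        = qBinom q (m+1) 0 * ((Dq q)^[0] f x * (Dq q)^[m+1-0] g (q^(0:ℕ) * x)) := by
      rw [qBinom_zero_r hq0 hq1, qBinom_zero_r hq0 hq1, pow_zero, one_mul]
    have em : qBinom q m m * ((Dq q)^[m+1] f x * (Dq q)^[m-m] g (q^(m+1) * x))
        = qBinom q (m+1) (m+1) * ((Dq q)^[m+1] f x * (Dq q)^[m+1-(m+1)] g (q^(m+1) * x)) := by
      rw [qBinom_self hq0 hq1, qBinom_self hq0 hq1, Nat.sub_self, Nat.sub_self]
    have emid : ∀ k ∈ Finset.range m,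
        q^(k+1) * qBinom q m (k+1) * ((Dq q)^[k+1] f x * (Dq q)^[m+1-(k+1)] g (q^(k+1) * x)) +
        qBinom q m k * ((Dq q)^[k+1] f x * (Dq q)^[m-k] g (q^(k+1) * x))
        = qBinom q (m+1) (k+1) * ((Dq q)^[k+1] f x * (Dq q)^[m+1-(k+1)] g (q^(k+1) * x)) := by
      intro k hk
      have hkm : k < m := Finset.mem_range.mp hk
      rw [show m+1-(k+1) = m-k by omega]
      rw [qPascal hq0 hq1 m (k+1) (by omega) (by omega)]
      simp only [Nat.add_sub_cancel]
      ring
    calc (∑ k ∈ Finset.range m, q^(k+1) * qBinom q m (k+1) *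
            ((Dq q)^[k+1] f x * (Dq q)^[m+1-(k+1)] g (q^(k+1) * x)) +
          q^(0:ℕ) * qBinom q m 0 * ((Dq q)^[0] f x * (Dq q)^[m+1-0] g (q^(0:ℕ) * x))) +
         (∑ k ∈ Finset.range m, qBinom q m k *
            ((Dq q)^[k+1] f x * (Dq q)^[m-k] g (q^(k+1) * x)) +
          qBinom q m m * ((Dq q)^[m+1] f x * (Dq q)^[m-m] g (q^(m+1) * x)))
        = (∑ k ∈ Finset.range m,
            (q^(k+1) * qBinom q m (k+1) * ((Dq q)^[k+1] f x * (Dq q)^[m+1-(k+1)] g (q^(k+1) * x)) +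
             qBinom q m k * ((Dq q)^[k+1] f x * (Dq q)^[m-k] g (q^(k+1) * x)))) +
          q^(0:ℕ) * qBinom q m 0 * ((Dq q)^[0] f x * (Dq q)^[m+1-0] g (q^(0:ℕ) * x)) +
          qBinom q m m * ((Dq q)^[m+1] f x * (Dq q)^[m-m] g (q^(m+1) * x)) := by
          rw [Finset.sum_add_distrib]; ring
      _ = (∑ k ∈ Finset.range m, qBinom q (m+1) (k+1) *
            ((Dq q)^[k+1] f x * (Dq q)^[m+1-(k+1)] g (q^(k+1) * x))) +
          qBinom q (m+1) 0 * ((Dq q)^[0] f x * (Dq q)^[m+1-0] g (q^(0:ℕ) * x)) +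
          qBinom q (m+1) (m+1) * ((Dq q)^[m+1] f x * (Dq q)^[m+1-(m+1)] g (q^(m+1) * x)) := by
          rw [Finset.sum_congr rfl emid, e0, em]
      _ = _ := by ring
end leibniz

section summ
open Filter Topology
variable {q b x u y : ℂ} {n : ℕ}

lemma sumE (hq1 : ‖q‖ < 1) (hu : ‖u‖ ≤ 1)
    (hby : ‖b * y‖ < 1) (i : ℕ) :
    Summable (fun m : ℕ => u ^ (m.choose 2) * qPoch q (q ^ n) m * (u ^ i * b * y) ^ m /
      (qPoch q q m * qPoch q (b * q ^ (n + i) * x) m)) := by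
  set w : ℂ := u ^ i * b * y with hw
  set c : ℂ := b * q ^ (n + i) * x with hc
  set E : ℕ → ℂ := fun m => u ^ (m.choose 2) * qPoch q (q ^ n) m * w ^ m /
      (qPoch q q m * qPoch q c m) with hE
  set r : ℝ := (1 + ‖b * y‖) / 2 with hr
  have habs : (0:ℝ) ≤ ‖b*y‖ := norm_nonneg _
  have hr1 : r < 1 := by rw [hr]; linarith
  have hbyr : ‖b*y‖ < r := by rw [hr]; linarith
  have key : ∀ m : ℕ, E (m+1) = E m *
      (u^m * ((1 - q^n*q^m) * w) / ((1 - q*q^m) * (1 - c*q^m))) := by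
    intro m
    simp only [hE]
    rw [choose_two_succ, pow_add, qPoch_succ q (q^n) m, qPoch_succ q q m, qPoch_succ q c m,
      pow_succ, div_mul_div_comm]
    congr 1
    · ring
    · ring
  have hq' : Tendsto (fun m : ℕ => q ^ m) atTop (𝓝 0) := by
    apply tendsto_pow_atTop_nhds_zero_of_norm_lt_one
    simpa using hq1
  have c1 : ContinuousAt (fun z : ℂ => (1 - q^n*z) * w / ((1 - q*z) * (1 - c*z))) 0 := by
    apply ContinuousAt.div
    · fun_prop
    · fun_prop
    · norm_num
  have hlim : Tendsto (fun m : ℕ => (1 - q^n*q^m) * w / ((1 - q*q^m) * (1 - c*q^m)))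
      atTop (𝓝 w) := by
    have := c1.tendsto.comp hq'
    simpa [Function.comp_def] using this
  have hglim : Tendsto (fun m : ℕ => ‖(1 - q^n*q^m) * w / ((1 - q*q^m) * (1 - c*q^m))‖)
      atTop (𝓝 ‖w‖) := hlim.norm
  have hwnorm : ‖w‖ < r := by
    rw [hw, mul_assoc, norm_mul, norm_pow]
    calc ‖u‖ ^ i * ‖b*y‖
        ≤ 1 * ‖b*y‖ := by
          apply mul_le_mul_of_nonneg_right _ habs
          exact pow_le_one₀ (norm_nonneg _) hu
      _ < r := by rw [one_mul]; exact hbyr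
  have hev : ∀ᶠ m : ℕ in atTop,
      ‖(1 - q^n*q^m) * w / ((1 - q*q^m) * (1 - c*q^m))‖ < r :=
    hglim.eventually_lt_const hwnorm
  apply summable_of_ratio_norm_eventually_le hr1
  filter_upwards [hev] with m hm
  rw [key m, norm_mul]
  have h1 : ‖u^m * ((1 - q^n*q^m) * w) / ((1 - q*q^m) * (1 - c*q^m))‖
      = ‖u‖^m * ‖(1 - q^n*q^m) * w / ((1 - q*q^m) * (1 - c*q^m))‖ := by
    rw [mul_div_assoc, norm_mul, norm_pow]
  rw [h1]
  have hu1 : ‖u‖^m ≤ 1 := pow_le_one₀ (norm_nonneg _) hu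
  have hgn : (0:ℝ) ≤ ‖(1 - q^n*q^m) * w / ((1 - q*q^m) * (1 - c*q^m))‖ := norm_nonneg _
  have hEn : (0:ℝ) ≤ ‖E m‖ := norm_nonneg _
  nlinarith [mul_le_mul_of_nonneg_right hu1 hgn, hm.le]
end summ

section keyid
variable {q a b x u y : ℂ} {n : ℕ}
variable (hq0 : 0 < ‖q‖) (hq1 : ‖q‖ < 1)
variable (hx : x ≠ 0) (hb : ∀ j : ℕ, 1 - b * q ^ j * x ≠ 0)

include hb in
lemma bpoch_ne (c N : ℕ) : qPoch q (b*q^c*x) N ≠ 0 := by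
  apply qPoch_ne_zero
  intro j _
  rw [show b*q^c*x*q^j = b*q^(c+j)*x by rw [pow_add]; ring]
  exact hb (c+j)

include hb in
lemma bpoch_ne0 (N : ℕ) : qPoch q (b*x) N ≠ 0 := by
  have := bpoch_ne (q := q) hb 0 N
  rwa [qPoch_congr q (n := N) (show b*q^(0:ℕ)*x = b*x by rw [pow_zero]; ring)] at this

set_option maxHeartbeats 2000000 in
include hq0 hq1 hb in
lemma keyid (ha : ∀ j : ℕ, j < n → 1 - a * q ^ j * x ≠ 0) (k m' : ℕ) (hkn : k ≤ n) :
    u ^ ((k+m').choose 2) * (y^(k+m') / qPoch q q (k+m')) *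
      (qBinom q (k+m') k *
        (((-a)^k * q^(k.choose 2) * (qPoch q q n / qPoch q q (n-k)) * qPoch q (a*q^k*x) (n-k)) *
         (b^m' * qPoch q (q^n) m' / qPoch q (b*(q^k*x)) (n+m'))))
    = (qPoch q (a*x) n / qPoch q (b*x) n *
        ((u*q)^(k.choose 2) * qBinom q n k *
          (qPoch q (b*x) k * (-(a*y))^k / (qPoch q (a*x) k * qPoch q (b*q^n*x) k)))) *
      (u ^ (m'.choose 2) * qPoch q (q^n) m' * (u^k*b*y)^m' /
        (qPoch q q m' * qPoch q (b*q^(n+k)*x) m')) := by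
  have napoch : ∀ N : ℕ, N ≤ n → qPoch q (a*x) N ≠ 0 := by
    intro N hN
    apply qPoch_ne_zero
    intro j hj
    rw [show a*x*q^j = a*q^j*x by ring]
    exact ha j (by omega)
  have hsplit1 : qPoch q (a*x) n = qPoch q (a*x) k * qPoch q (a*q^k*x) (n-k) := by
    have h := qPoch_add q (a*x) k (n-k)
    rw [show k + (n-k) = n by omega] at h
    rw [h, qPoch_congr q (n := n-k) (show (a*x)*q^k = a*q^k*x by ring)]
  have hsplit2 : qPoch q (b*(q^k*x)) (n+m')
      = qPoch q (b*q^k*x) n * qPoch q (b*q^(n+k)*x) m' := by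
    rw [qPoch_congr q (n := n+m') (show b*(q^k*x) = b*q^k*x by ring),
      qPoch_add q (b*q^k*x) n m',
      qPoch_congr q (n := m') (show (b*q^k*x)*q^n = b*q^(n+k)*x by rw [pow_add]; ring)]
  have hsplit3 : qPoch q (b*x) k * qPoch q (b*q^k*x) n
      = qPoch q (b*x) n * qPoch q (b*q^n*x) k := by
    calc qPoch q (b*x) k * qPoch q (b*q^k*x) n
        = qPoch q (b*x) (k+n) := by
          rw [qPoch_add q (b*x) k n,
            qPoch_congr q (n := n) (show (b*x)*q^k = b*q^k*x by ring)]
      _ = qPoch q (b*x) (n+k) := by rw [Nat.add_comm]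
      _ = _ := by
          rw [qPoch_add q (b*x) n k,
            qPoch_congr q (n := k) (show (b*x)*q^n = b*q^n*x by ring)]
  have hsub : qPoch q (b*q^k*x) n
      = qPoch q (b*x) n * qPoch q (b*q^n*x) k / qPoch q (b*x) k := by
    rw [eq_div_iff (bpoch_ne0 hb k)]
    linear_combination hsplit3
  rw [hsplit1, hsplit2, hsub]
  simp only [qBinom, Nat.add_sub_cancel_left]
  rw [choose_two_add k m', pow_add, pow_add, pow_mul, mul_pow (u:ℂ) q,
    show (-(a*y))^k = (-a)^k * y^k by rw [show -(a*y) = (-a)*y by ring, mul_pow],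
    show (u^k*b*y)^m' = (u^k)^m' * b^m' * y^m' by rw [mul_pow, mul_pow],
    pow_add y k m']
  have nq : ∀ N : ℕ, qPoch q q N ≠ 0 := qq_ne_zero hq0 hq1
  have nb1 : qPoch q (b*x) n ≠ 0 := bpoch_ne0 hb n
  have nb2 : qPoch q (b*x) k ≠ 0 := bpoch_ne0 hb k
  have nb3 : qPoch q (b*q^n*x) k ≠ 0 := bpoch_ne hb n k
  have nb4 : qPoch q (b*q^(n+k)*x) m' ≠ 0 := bpoch_ne hb (n+k) m'
  have na1 : qPoch q (a*x) k ≠ 0 := napoch k hkn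
  have nq1 : qPoch q q (k+m') ≠ 0 := nq _
  set T : ℂ := u ^ k.choose 2 * u ^ m'.choose 2 * u ^ (k * m') * y ^ k * y ^ m' * a ^ k *
    q ^ k.choose 2 * qPoch q q n * qPoch q (a * q ^ k * x) (n - k) * b ^ m' *
    qPoch q (q ^ n) m' * qPoch q (b*x) k * (qPoch q q k)⁻¹ * (qPoch q q m')⁻¹ *
    (qPoch q q (n - k))⁻¹ * (qPoch q (b*x) n)⁻¹ * (qPoch q (b*q^n*x) k)⁻¹ *
    (qPoch q (b*q^(n+k)*x) m')⁻¹ * (-1) ^ k with hT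
  have c3 : (qPoch q (b*x) k)⁻¹⁻¹ = qPoch q (b*x) k := inv_inv _
  set A : ℂ := u ^ k.choose 2 * u ^ m'.choose 2 * u ^ (k * m') * y ^ k * y ^ m' *
    qPoch q q (k + m') * (qPoch q q (k + m'))⁻¹ * (qPoch q q k)⁻¹ * (qPoch q q m')⁻¹ *
    a ^ k * q ^ k.choose 2 * qPoch q q n * (qPoch q q (n - k))⁻¹ *
    qPoch q (a * q ^ k * x) (n - k) * b ^ m' * qPoch q (q ^ n) m' *
    (qPoch q (b * x) n)⁻¹ * (qPoch q (b * q ^ n * x) k)⁻¹ *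
    (qPoch q (b * q ^ (n + k) * x) m')⁻¹ * (-1) ^ k with hA
  linear_combination T * (mul_inv_cancel₀ nq1) - T * (mul_inv_cancel₀ na1) + A * c3
end keyid

theorem stmt9 (q a b x u y : ℂ) (n : ℕ)
    (hq0 : 0 < ‖q‖) (hq1 : ‖q‖ < 1)
    (hu : ‖u‖ ≤ 1) (hby : ‖b * y‖ < 1) (hx : x ≠ 0)
    (ha : ∀ j : ℕ, j < n → 1 - a * q ^ j * x ≠ 0)
    (hb : ∀ j : ℕ, 1 - b * q ^ j * x ≠ 0) :
    (Summable fun m : ℕ =>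
        u ^ (m.choose 2) * (y ^ m / qPoch q q m) *
          ((Dq q)^[m] (fun t => qPoch q (a * t) n / qPoch q (b * t) n) x)) ∧
    (∀ i : ℕ, i ≤ n →
      Summable fun m : ℕ =>
        u ^ (m.choose 2) * qPoch q (q ^ n) m * (u ^ i * b * y) ^ m /
          (qPoch q q m * qPoch q (b * q ^ (n + i) * x) m)) ∧
    Tq q u y (fun t => qPoch q (a * t) n / qPoch q (b * t) n) x =
      qPoch q (a * x) n / qPoch q (b * x) n *
        ∑ i ∈ Finset.range (n + 1),
          (u * q) ^ (i.choose 2) * qBinom q n i *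
            (qPoch q (b * x) i * (-(a * y)) ^ i /
              (qPoch q (a * x) i * qPoch q (b * q ^ n * x) i)) *
            ∑' m : ℕ,
              u ^ (m.choose 2) * qPoch q (q ^ n) m * (u ^ i * b * y) ^ m /
                (qPoch q q m * qPoch q (b * q ^ (n + i) * x) m) := by
  have hqn : q ≠ 0 := hqne hq0
  set E : ℕ → ℕ → ℂ := fun i m => u ^ (m.choose 2) * qPoch q (q ^ n) m * (u ^ i * b * y) ^ m /
      (qPoch q q m * qPoch q (b * q ^ (n + i) * x) m) with hE
  set P : ℕ → ℂ := fun i => qPoch q (a*x) n / qPoch q (b*x) n *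
      ((u*q)^(i.choose 2) * qBinom q n i *
        (qPoch q (b*x) i * (-(a*y))^i / (qPoch q (a*x) i * qPoch q (b*q^n*x) i))) with hP
  set d : ℕ → ℕ → ℂ := fun k m => if k ≤ m then P k * E k (m-k) else 0 with hd
  have hEsum : ∀ i : ℕ, Summable (E i) := fun i => sumE hq1 hu hby i
  have hdsum : ∀ k : ℕ, Summable (d k) := by
    intro k
    rw [← summable_nat_add_iff k]
    have heq : (fun m => d k (m+k)) = fun m => P k * E k m := by
      funext m
      simp only [hd, Nat.le_add_left, if_pos, Nat.add_sub_cancel]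
    rw [heq]
    exact (hEsum k).mul_left _
  have hbshift : ∀ k j : ℕ, 1 - b*q^j*(q^k*x) ≠ 0 := by
    intro k j
    rw [show b*q^j*(q^k*x) = b*q^(j+k)*x by rw [pow_add]; ring]
    exact hb (j+k)
  have hmain : ∀ m : ℕ,
      u ^ (m.choose 2) * (y ^ m / qPoch q q m) *
        ((Dq q)^[m] (fun t => qPoch q (a * t) n / qPoch q (b * t) n) x)
      = ∑ k ∈ Finset.range (n+1), d k m := by
    intro m
    have hfg : (fun t => qPoch q (a * t) n / qPoch q (b * t) n)
        = fun t => (qPoch q (a*t) n) * (qPoch q (b*t) n)⁻¹ := by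
      funext t; rw [div_eq_mul_inv]
    rw [hfg, qLeibniz hq0 hq1 _ _ m x]
    have hsubst : ∀ k ∈ Finset.range (m+1),
        qBinom q m k * ((Dq q)^[k] (fun t => qPoch q (a*t) n) x *
          (Dq q)^[m-k] (fun t => (qPoch q (b*t) n)⁻¹) (q^k*x))
        = qBinom q m k *
            ((if k ≤ n then (-a)^k * q^(k.choose 2) * (qPoch q q n / qPoch q q (n-k)) *
                qPoch q (a*q^k*x) (n-k) else 0) *
             (b^(m-k) * qPoch q (q^n) (m-k) / qPoch q (b*(q^k*x)) (n+(m-k)))) := by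
      intro k _
      rw [DqA_iter hq0 hq1 k x hx,
        DqB_iter hq0 (m-k) (q^k*x) (mul_ne_zero (pow_ne_zero _ hqn) hx) (hbshift k)]
    rw [Finset.sum_congr rfl hsubst, Finset.mul_sum]
    set w : ℕ → ℂ := fun k => if k ≤ m ∧ k ≤ n then P k * E k (m-k) else 0 with hw
    have stepA : ∀ k ∈ Finset.range (m+1),
        u ^ (m.choose 2) * (y ^ m / qPoch q q m) *
          (qBinom q m k *
            ((if k ≤ n then (-a)^k * q^(k.choose 2) * (qPoch q q n / qPoch q q (n-k)) *
                qPoch q (a*q^k*x) (n-k) else 0) *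
             (b^(m-k) * qPoch q (q^n) (m-k) / qPoch q (b*(q^k*x)) (n+(m-k)))))
        = w k := by
      intro k hk
      have hkm : k ≤ m := by have := Finset.mem_range.mp hk; omega
      by_cases hkn : k ≤ n
      · rw [if_pos hkn, hw]
        simp only
        rw [if_pos ⟨hkm, hkn⟩]
        obtain ⟨j, rfl⟩ : ∃ j, m = k + j := ⟨m - k, by omega⟩
        simp only [Nat.add_sub_cancel_left]
        exact keyid hq0 hq1 hb ha k j hkn
      · rw [if_neg hkn, hw]
        simp only
        rw [if_neg (by tauto)]
        simp
    rw [Finset.sum_congr rfl stepA]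
    have hzero : ∀ k : ℕ, ¬(k ≤ m ∧ k ≤ n) → w k = 0 := by
      intro k hk; rw [hw]; simp only; rw [if_neg hk]
    have h1 : ∑ k ∈ Finset.range (m+1), w k = ∑ k ∈ Finset.range (Nat.max m n + 1), w k := by
      apply Finset.sum_subset (Finset.range_subset_range.mpr (Nat.add_le_add_right (Nat.le_max_left m n) 1))
      intro i _ hi
      exact hzero i (by simp at hi; omega)
    have h2 : ∑ k ∈ Finset.range (n+1), w k = ∑ k ∈ Finset.range (Nat.max m n + 1), w k := by
      apply Finset.sum_subset (Finset.range_subset_range.mpr (Nat.add_le_add_right (Nat.le_max_right m n) 1))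
      intro i _ hi
      exact hzero i (by simp at hi; omega)
    rw [h1, ← h2]
    apply Finset.sum_congr rfl
    intro k hk
    have hkn : k ≤ n := by have := Finset.mem_range.mp hk; omega
    rw [hw, hd]
    simp only
    by_cases hkm : k ≤ m
    · rw [if_pos ⟨hkm, hkn⟩, if_pos hkm]
    · rw [if_neg (by tauto), if_neg hkm]
  refine ⟨?_, ?_, ?_⟩
  · have : (fun m : ℕ => u ^ (m.choose 2) * (y ^ m / qPoch q q m) *
        ((Dq q)^[m] (fun t => qPoch q (a * t) n / qPoch q (b * t) n) x))
        = fun m => ∑ k ∈ Finset.range (n+1), d k m := funext hmain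
    rw [this]
    exact summable_sum (fun k _ => hdsum k)
  · exact fun i _ => hEsum i
  · rw [Tq]
    calc (∑' m : ℕ, u ^ (m.choose 2) * (y ^ m / qPoch q q m) *
            ((Dq q)^[m] (fun t => qPoch q (a * t) n / qPoch q (b * t) n) x))
        = ∑' m : ℕ, ∑ k ∈ Finset.range (n+1), d k m := tsum_congr hmain
      _ = ∑ k ∈ Finset.range (n+1), ∑' m : ℕ, d k m := Summable.tsum_finsetSum (fun k _ => hdsum k)
      _ = ∑ k ∈ Finset.range (n+1), P k * ∑' m : ℕ, E k m := by
          apply Finset.sum_congr rfl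
          intro k _
          have hshift := Summable.sum_add_tsum_nat_add (f := d k) k (hdsum k)
          have hz : ∑ i ∈ Finset.range k, d k i = 0 := by
            apply Finset.sum_eq_zero
            intro i hi
            have : ¬ k ≤ i := by have := Finset.mem_range.mp hi; omega
            rw [hd]; simp only; rw [if_neg this]
          rw [hz, zero_add] at hshift
          rw [← hshift]
          have : (fun i => d k (i+k)) = fun i => P k * E k i := by
            funext i
            rw [hd]; simp only [Nat.le_add_left, if_pos, Nat.add_sub_cancel]
          rw [this, tsum_mul_left]
      _ = _ := by
          rw [Finset.mul_sum]
          apply Finset.sum_congr rfl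
          intro k _
          rw [hP]
          simp only
          ring
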